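/- Let A be an n×n complex upper triangular matrix with constant diagonal α such that some superdiagonal entry A_{k,k+1} equals 0 (for some 1 ≤ k ≤ n-1), with n ≥ 2. Then there exists an idempotent P commuting with A with P ≠ 0 and P ≠ I. (That is, A is not strongly irreducible.) -/

import Mathlib

open Matrix Finset

/-- If an upper triangular matrix with constant diagonal has a vanishing superdiagonal entry,
then it is not strongly irreducible: its commutant contains a nontrivial idempotent. -/
theorem stmt3 (n : ℕ) (hn : 2 ≤ n) (α : ℂ) (A : Matrix (Fin n) (Fin n) ℂ)
    (hdiag : ∀ i : Fin n, A i i = α)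
    (hlow : ∀ i j : Fin n, j < i → A i j = 0)
    (hk : ∃ k l : Fin n, (l : ℕ) = (k : ℕ) + 1 ∧ A k l = 0) :
    ∃ P : Matrix (Fin n) (Fin n) ℂ, P * P = P ∧ A * P = P * A ∧ P ≠ 0 ∧ P ≠ 1 := by
  obtain ⟨k, l, hkl, hAkl⟩ := hk
  have hn0 : 0 < n := by omega
  set N : Matrix (Fin n) (Fin n) ℂ := A - α • 1 with hNdef
  have hA : A = N + α • 1 := by simp [hNdef]
  -- N is strictly upper triangular
  have hsu : ∀ i j : Fin n, (j : ℕ) ≤ (i : ℕ) → N i j = 0 := by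
    intro i j hij
    rcases eq_or_lt_of_le hij with h | h
    · have hij' : i = j := Fin.ext h.symm
      subst hij'
      simp [hNdef, hdiag i]
    · have hji : j < i := h
      have hne : i ≠ j := Fin.ne_of_gt hji
      simp [hNdef, hlow i j hji, Matrix.one_apply, hne]
  -- powers vanish below the p-th superdiagonal
  have hpow : ∀ p : ℕ, ∀ i j : Fin n, (j : ℕ) < (i : ℕ) + p → (N ^ p) i j = 0 := by
    intro p
    induction p with
    | zero =>
      intro i j hij
      have : i ≠ j := by intro h; subst h; omega
      simp [Matrix.one_apply, this]
    | succ p ih =>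
      intro i j hij
      rw [pow_succ, Matrix.mul_apply]
      apply Finset.sum_eq_zero
      intro t _
      rcases lt_or_ge (t : ℕ) ((i : ℕ) + p) with ht | ht
      · rw [ih i t ht, zero_mul]
      · rw [hsu t j (by omega), mul_zero]
  -- the entry on the p-th superdiagonal vanishes if the path crosses k,k+1
  have hprod : ∀ p : ℕ, ∀ i j : Fin n, (j : ℕ) = (i : ℕ) + p →
      (i : ℕ) ≤ (k : ℕ) → (k : ℕ) < (j : ℕ) → (N ^ p) i j = 0 := by
    intro p
    induction p with
    | zero => intro i j h1 h2 h3; omega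
    | succ p ih =>
      intro i j h1 h2 h3
      rw [pow_succ, Matrix.mul_apply]
      apply Finset.sum_eq_zero
      intro t _
      rcases lt_trichotomy (t : ℕ) ((i : ℕ) + p) with ht | ht | ht
      · rw [hpow p i t ht, zero_mul]
      · rcases lt_or_ge (k : ℕ) ((i : ℕ) + p) with hkp | hkp
        · rw [ih i t (by omega) h2 (by omega), zero_mul]
        · have hk' : (k : ℕ) = (i : ℕ) + p := by omega
          have htk : t = k := Fin.ext (by omega)
          have hjl : j = l := Fin.ext (by omega)
          rw [htk, hjl]
          have : N k l = 0 := by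
            simp [hNdef, hAkl, Matrix.one_apply, show k ≠ l from by
              intro h; rw [h] at hkl; omega]
          rw [this, mul_zero]
      · rw [hsu t j (by omega), mul_zero]
  -- consequently N^(n-1) = 0
  have hNn : N ^ (n - 1) = 0 := by
    ext i j
    simp only [Matrix.zero_apply]
    rcases lt_or_ge (j : ℕ) ((i : ℕ) + (n - 1)) with h | h
    · exact hpow (n - 1) i j h
    · have hj : (j : ℕ) < n := j.isLt
      have hi0 : (i : ℕ) = 0 := by omega
      have hjn : (j : ℕ) = (i : ℕ) + (n - 1) := by omega
      have hl : (l : ℕ) < n := l.isLt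
      exact hprod (n - 1) i j hjn (by omega) (by omega)
  -- the nilpotency index
  have hex : ∃ p : ℕ, N ^ p = 0 := ⟨n - 1, hNn⟩
  set m := Nat.find hex with hmdef
  have hmz : N ^ m = 0 := Nat.find_spec hex
  have hmle : m ≤ n - 1 := Nat.find_min' hex hNn
  have hm1 : 1 ≤ m := by
    by_contra h
    have hm0 : m = 0 := by omega
    rw [hm0, pow_zero] at hmz
    have := congrFun (congrFun hmz ⟨0, hn0⟩) ⟨0, hn0⟩
    simp [Matrix.one_apply] at this
  set m' := m - 1 with hm'def
  have hm'm : m' + 1 = m := by omega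
  have hNm : N ^ (m' + 1) = 0 := by rw [hm'm]; exact hmz
  have hNm' : N ^ m' ≠ 0 := Nat.find_min hex (by omega)
  -- choose a cyclic vector
  have hentry : ∃ i0 j0 : Fin n, (N ^ m') i0 j0 ≠ 0 := by
    by_contra h
    push_neg at h
    exact hNm' (by ext i j; simpa using h i j)
  obtain ⟨i0, j0, h0⟩ := hentry
  set v : Fin n → ℂ := Pi.single j0 1 with hvdef
  set w : ℕ → (Fin n → ℂ) := fun s => (N ^ s) *ᵥ v with hwdef
  have hwN : ∀ a b : ℕ, (N ^ a) *ᵥ (w b) = w (a + b) := by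
    intro a b
    rw [hwdef]
    simp only []
    rw [Matrix.mulVec_mulVec, ← pow_add]
  have hws : ∀ s : ℕ, m' < s → w s = 0 := by
    intro s hs
    have : N ^ s = 0 := by
      have : N ^ s = N ^ (m' + 1) * N ^ (s - m' - 1) := by
        rw [← pow_add]; congr 1; omega
      rw [this, hNm, zero_mul]
    simp [hwdef, this]
  have hwm' : w m' ≠ 0 := by
    intro h
    apply h0
    have := congrFun h i0
    simpa [hwdef, hvdef, Matrix.mulVec_single] using this
  -- linear independence of w 0, ..., w m'
  set f : Fin (m' + 1) → (Fin n → ℂ) := fun s => w (s : ℕ) with hfdef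
  have hli : LinearIndependent ℂ f := by
    rw [Fintype.linearIndependent_iff]
    intro g hg
    have key : ∀ t : ℕ, ∀ i : Fin (m' + 1), (i : ℕ) < t → g i = 0 := by
      intro t
      induction t with
      | zero => intro i hi; omega
      | succ t ih =>
        intro i hi
        rcases lt_or_ge (i : ℕ) t with h | h
        · exact ih i h
        · have hit : (i : ℕ) = t := by omega
          have htm : t ≤ m' := by omega
          have h2 : ∑ j : Fin (m' + 1), g j • w ((m' - t) + (j : ℕ)) = 0 := by
            have := congrArg ((N ^ (m' - t)).mulVecLin) hg
            simpa [map_sum, Matrix.mulVecLin_apply, hfdef, hwN] using this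
          rw [Finset.sum_eq_single i] at h2
          · rw [show m' - t + (i : ℕ) = m' by omega] at h2
            rcases smul_eq_zero.mp h2 with h3 | h3
            · exact h3
            · exact absurd h3 hwm'
          · intro j _ hji
            rcases lt_or_ge (j : ℕ) t with hj | hj
            · rw [ih j hj, zero_smul]
            · have : t < (j : ℕ) := by
                rcases eq_or_lt_of_le hj with h' | h'
                · exact absurd (Fin.ext (by omega) : j = i) hji
                · exact h'
              rw [hws (m' - t + (j : ℕ)) (by omega), smul_zero]
          · intro h'
            exact absurd (Finset.mem_univ i) h'
    intro i
    exact key (m' + 1) i (by omega)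
  -- dual functional
  set W : Submodule ℂ (Fin n → ℂ) :=
    Submodule.span ℂ (f '' {i | i ≠ Fin.last m'}) with hWdef
  have hnm : w m' ∉ W := by
    have : f (Fin.last m') ∉ W := hli.notMem_span_image (by simp)
    simpa [hfdef, Fin.last] using this
  have hq : W.mkQ (w m') ≠ 0 := by
    rw [Submodule.mkQ_apply, Ne, Submodule.Quotient.mk_eq_zero]
    exact hnm
  obtain ⟨φ0, hφ0⟩ : ∃ φ0 : Module.Dual ℂ ((Fin n → ℂ) ⧸ W), φ0 (W.mkQ (w m')) ≠ 0 := by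
    by_contra h
    push_neg at h
    exact hq ((Module.forall_dual_apply_eq_zero_iff ℂ _).mp h)
  set φ : (Fin n → ℂ) →ₗ[ℂ] ℂ := (φ0 (W.mkQ (w m')))⁻¹ • (φ0 ∘ₗ W.mkQ) with hφdef
  have hφ1 : φ (w m') = 1 := by
    simp only [hφdef, LinearMap.smul_apply, LinearMap.comp_apply, smul_eq_mul]
    exact inv_mul_cancel₀ hφ0
  have hφ0' : ∀ s : ℕ, s ≠ m' → φ (w s) = 0 := by
    intro s hs
    rcases lt_or_gt_of_ne hs with h | h
    · have hmem : w s ∈ W := by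
        apply Submodule.subset_span
        exact ⟨⟨s, by omega⟩, by simp [Fin.ext_iff, Fin.last]; omega, by simp [hfdef]⟩
      simp [hφdef, Submodule.mkQ_apply, (Submodule.Quotient.mk_eq_zero W).mpr hmem]
    · simp [hφdef, hws s h]
  -- the row vector representing φ
  set u : Fin n → ℂ := fun j => φ (Pi.single j 1) with hudef
  have hu : ∀ x : Fin n → ℂ, (∑ j, u j * x j) = φ x := by
    intro x
    have hx : x = ∑ j, x j • (Pi.single j 1 : Fin n → ℂ) := by
      ext i
      simp [Pi.single_apply]
    conv_rhs => rw [hx]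
    rw [map_sum]
    apply Finset.sum_congr rfl
    intro j _
    rw [_root_.map_smul, smul_eq_mul, mul_comm]
  -- matrices U, V
  set V : Matrix (Fin n) (Fin 1) ℂ := fun i _ => v i with hVdef
  set U : Matrix (Fin 1) (Fin n) ℂ := fun _ j => u j with hUdef
  have keyM : ∀ s : ℕ, U * N ^ s * V =
      if s = m' then (1 : Matrix (Fin 1) (Fin 1) ℂ) else 0 := by
    intro s
    ext a b
    have hab : a = b := Subsingleton.elim a b
    subst hab
    rw [Matrix.mul_assoc, Matrix.mul_apply]
    have he : ∑ t, U a t * (N ^ s * V) t a = ∑ t, u t * (w s) t := by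
      apply Finset.sum_congr rfl
      intro t _
      rw [hUdef, hVdef]; erw [Matrix.mul_apply]
      simp [hwdef, Matrix.mulVec, dotProduct]
    rw [he]
    have : ∑ t, u t * (w s) t = φ (w s) := hu (w s)
    rw [this]
    by_cases hsm : s = m'
    · simp [hsm, hφ1, Matrix.one_apply]
    · simp [hsm, hφ0' s hsm]
  -- grouping helper
  have hgroup : ∀ (e : ℕ) (Z : Matrix (Fin 1) (Fin n) ℂ),
      U * (N ^ e * (V * Z)) = (U * N ^ e * V) * Z := by
    intro e Z
    simp only [Matrix.mul_assoc]
  -- cross products of the building blocks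
  have hcross : ∀ s t : ℕ, s ≤ m' → t ≤ m' →
      (N ^ s * V * U * N ^ (m' - s)) * (N ^ t * V * U * N ^ (m' - t)) =
      if t = s then N ^ s * V * U * N ^ (m' - s) else 0 := by
    intro s t hs ht
    have step1 : (N ^ s * V * U * N ^ (m' - s)) * (N ^ t * V * U * N ^ (m' - t)) =
        N ^ s * (V * ((U * N ^ (m' - s + t) * V) * (U * N ^ (m' - t)))) := by
      rw [← hgroup]
      simp only [Matrix.mul_assoc]
      rw [← Matrix.mul_assoc (N ^ (m' - s)) (N ^ t), ← pow_add]
    rw [step1, keyM]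
    by_cases h : t = s
    · subst h
      rw [if_pos (by omega), if_pos rfl, Matrix.one_mul]
      simp only [Matrix.mul_assoc]
    · rw [if_neg (by omega), if_neg h, Matrix.zero_mul, Matrix.mul_zero,
        Matrix.mul_zero]
  -- the projection
  set P : Matrix (Fin n) (Fin n) ℂ :=
    ∑ s ∈ Finset.range (m' + 1), N ^ s * V * U * N ^ (m' - s) with hPdef
  -- P is idempotent
  have hPP : P * P = P := by
    rw [hPdef, Finset.sum_mul]
    apply Finset.sum_congr rfl
    intro s hs
    have hs' : s ≤ m' := by
      have := Finset.mem_range.mp hs; omega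
    rw [Finset.mul_sum, Finset.sum_eq_single s]
    · rw [hcross s s hs' hs', if_pos rfl]
    · intro t ht hts
      have ht' : t ≤ m' := by
        have := Finset.mem_range.mp ht; omega
      rw [hcross s t hs' ht', if_neg hts]
    · intro h
      exact absurd (Finset.mem_range.mpr (by omega)) h
  -- P commutes with N
  have hNP : N * P = P * N := by
    rw [hPdef, Finset.mul_sum, Finset.sum_mul]
    have left : ∀ s : ℕ, N * (N ^ s * V * U * N ^ (m' - s)) =
        N ^ (s + 1) * V * U * N ^ (m' - s) := by
      intro s
      simp only [pow_succ', Matrix.mul_assoc]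
    have right : ∀ s : ℕ, (N ^ s * V * U * N ^ (m' - s)) * N =
        N ^ s * V * U * N ^ (m' - s + 1) := by
      intro s
      simp only [pow_succ, Matrix.mul_assoc]
    calc ∑ s ∈ Finset.range (m' + 1), N * (N ^ s * V * U * N ^ (m' - s))
        = ∑ s ∈ Finset.range (m' + 1), N ^ (s + 1) * V * U * N ^ (m' - s) :=
          Finset.sum_congr rfl (fun s _ => left s)
      _ = ∑ s ∈ Finset.range m', N ^ (s + 1) * V * U * N ^ (m' - s) := by
          rw [Finset.sum_range_succ, hNm, Matrix.zero_mul, Matrix.zero_mul,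
            Matrix.zero_mul, add_zero]
      _ = ∑ s ∈ Finset.range m', N ^ (s + 1) * V * U * N ^ (m' - (s + 1) + 1) := by
          apply Finset.sum_congr rfl
          intro s hs
          have := Finset.mem_range.mp hs
          congr 2
          omega
      _ = ∑ s ∈ Finset.range (m' + 1), N ^ s * V * U * N ^ (m' - s + 1) := by
          rw [Finset.sum_range_succ']
          have : N ^ 0 * V * U * N ^ (m' - 0 + 1) = 0 := by
            rw [show m' - 0 + 1 = m' + 1 from by omega, hNm, Matrix.mul_zero]
          rw [this, add_zero]
      _ = ∑ s ∈ Finset.range (m' + 1), (N ^ s * V * U * N ^ (m' - s)) * N :=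
          Finset.sum_congr rfl (fun s _ => (right s).symm)
  -- trace of P
  have hXtr : ∀ s : ℕ, s ≤ m' →
      Matrix.trace (N ^ s * V * U * N ^ (m' - s)) = 1 := by
    intro s hs
    rw [Matrix.mul_assoc (N ^ s * V) U, Matrix.trace_mul_comm]
    have : U * N ^ (m' - s) * (N ^ s * V) = U * N ^ m' * V := by
      simp only [Matrix.mul_assoc]
      rw [← Matrix.mul_assoc (N ^ (m' - s)) (N ^ s), ← pow_add,
        show m' - s + s = m' from by omega]
    rw [this, keyM, if_pos rfl, Matrix.trace_one]
    simp
  have htr : Matrix.trace P = ((m' + 1 : ℕ) : ℂ) := by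
    rw [hPdef, Matrix.trace_sum]
    rw [Finset.sum_congr rfl (fun s hs => hXtr s (by
      have := Finset.mem_range.mp hs; omega))]
    simp
  refine ⟨P, hPP, ?_, ?_, ?_⟩
  · rw [hA, add_mul, mul_add, hNP, smul_mul_assoc, mul_smul_comm,
      Matrix.one_mul, Matrix.mul_one]
  · intro h
    rw [h, Matrix.trace_zero] at htr
    have : ((m' + 1 : ℕ) : ℂ) ≠ 0 := Nat.cast_ne_zero.mpr (by omega)
    exact this htr.symm
  · intro h
    rw [h, Matrix.trace_one] at htr
    have : (m' + 1 : ℕ) = Fintype.card (Fin n) := Nat.cast_injective htr.symm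
    rw [Fintype.card_fin] at this
    omega
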